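/- Let T be a positive bounded operator on a complex Hilbert space H and let g ∈ H be a unit vector. Then for every real p with 0 < p ≤ 1, ⟨T^p g, g⟩ ≤ ⟨Tg, g⟩^p. -/

import Mathlib

open scoped InnerProductSpace NNReal

private lemma scalar_tangent (x s q : ℝ) (hx : 0 ≤ x) (hs : 0 < s)
    (hq0 : 0 < q) (hq1 : q ≤ 1) :
    x ^ q ≤ q * s ^ (q - 1) * x + (1 - q) * s ^ q := by
  have h := Real.geom_mean_le_arith_mean2_weighted hq0.le (by linarith : (0:ℝ) ≤ 1 - q)
    hx hs.le (by ring)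
  have hsp : (0:ℝ) < s ^ (q - 1) := Real.rpow_pos_of_pos hs _
  have h2 := mul_le_mul_of_nonneg_right h hsp.le
  have e1 : x ^ q * s ^ (1 - q) * s ^ (q - 1) = x ^ q := by
    rw [mul_assoc, ← Real.rpow_add hs]; simp
  have e2 : s * s ^ (q - 1) = s ^ q := by
    nth_rewrite 1 [← Real.rpow_one s]
    rw [← Real.rpow_add hs]; ring_nf
  calc x ^ q = x ^ q * s ^ (1 - q) * s ^ (q - 1) := e1.symm
    _ ≤ (q * x + (1 - q) * s) * s ^ (q - 1) := h2
    _ = q * s ^ (q - 1) * x + (1 - q) * (s * s ^ (q - 1)) := by ring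
    _ = q * s ^ (q - 1) * x + (1 - q) * s ^ q := by rw [e2]

/-- For a positive bounded operator `T` on a complex Hilbert space, a unit vector `g`,
and a real `0 < p ≤ 1`, one has `⟨T^p g, g⟩ ≤ ⟨Tg, g⟩ ^ p`, where `T ^ p` is given by the
continuous functional calculus (`CFC.rpow`). -/
theorem inner_rpow_apply_le_inner_pow
    {H : Type*} [NormedAddCommGroup H] [InnerProductSpace ℂ H] [CompleteSpace H]
    (T : H →L[ℂ] H) (hT : 0 ≤ T) (g : H) (hg : ‖g‖ = 1) (p : ℝ)
    (hp0 : 0 < p) (hp1 : p ≤ 1) :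
    (⟪(CFC.rpow T p) g, g⟫_ℂ).re ≤ (⟪T g, g⟫_ℂ).re ^ p := by
  set a : ℝ := (⟪T g, g⟫_ℂ).re with ha_def
  have hTpos : T.IsPositive := (ContinuousLinearMap.nonneg_iff_isPositive T).mp hT
  have ha0 : 0 ≤ a := hTpos.re_inner_nonneg_left g
  -- the operator inequality for each s > 0
  have op_key : ∀ s : ℝ, 0 < s →
      CFC.rpow T p ≤ (p * s ^ (p - 1)) • T + algebraMap ℝ (H →L[ℂ] H) ((1 - p) * s ^ p) := by
    intro s hs
    have hsa : IsSelfAdjoint T := .of_nonneg hT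
    have hrpow : CFC.rpow T p
        = cfc (fun x : ℝ => (((x.toNNReal : ℝ≥0) ^ p : ℝ≥0) : ℝ)) T := by
      rw [show CFC.rpow T p = cfc (fun x : ℝ≥0 => x ^ p) T from rfl,
        cfc_nnreal_eq_real _ T hT]
    have haffine : cfc (fun x : ℝ => p * s ^ (p - 1) * x + (1 - p) * s ^ p) T
        = (p * s ^ (p - 1)) • T + algebraMap ℝ (H →L[ℂ] H) ((1 - p) * s ^ p) := by
      rw [cfc_add (a := T) (fun x : ℝ => p * s ^ (p - 1) * x) (fun _ => (1 - p) * s ^ p)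
          (by fun_prop) (by fun_prop),
        cfc_const_mul_id _ T hsa, cfc_const _ T hsa]
    rw [hrpow, ← haffine]
    refine cfc_mono (fun x hx => ?_) ?_ ?_
    · have hx0 : 0 ≤ x := spectrum_nonneg_of_nonneg hT hx
      have : (((x.toNNReal : ℝ≥0) ^ p : ℝ≥0) : ℝ) = x ^ p := by
        rw [NNReal.coe_rpow, Real.coe_toNNReal x hx0]
      rw [this]
      exact scalar_tangent x s p hx0 hs hp0 hp1
    · apply Continuous.continuousOn
      exact (NNReal.continuous_coe.comp
        ((NNReal.continuous_rpow_const hp0.le).comp continuous_real_toNNReal))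
    · fun_prop
  -- translate to an inner-product inequality
  have key : ∀ s : ℝ, 0 < s →
      (⟪(CFC.rpow T p) g, g⟫_ℂ).re ≤ p * s ^ (p - 1) * a + (1 - p) * s ^ p := by
    intro s hs
    have h := op_key s hs
    set B := (p * s ^ (p - 1)) • T + algebraMap ℝ (H →L[ℂ] H) ((1 - p) * s ^ p) with hB
    have hpos : (B - CFC.rpow T p).IsPositive :=
      (ContinuousLinearMap.nonneg_iff_isPositive _).mp (sub_nonneg.mpr h)
    have h2 := hpos.inner_nonneg_left g
    have hgg : ⟪g, g⟫_ℂ = 1 := by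
      rw [inner_self_eq_norm_sq_to_K, hg]; norm_num
    have hBg : (⟪B g, g⟫_ℂ).re = p * s ^ (p - 1) * a + (1 - p) * s ^ p := by
      simp only [hB, ContinuousLinearMap.add_apply, ContinuousLinearMap.smul_apply,
        inner_add_left, inner_smul_left]
      have : (algebraMap ℝ (H →L[ℂ] H) ((1 - p) * s ^ p)) g = ((1 - p) * s ^ p) • g := by
        simp [Algebra.algebraMap_eq_smul_one]
      rw [this, RCLike.real_smul_eq_coe_smul (K := ℂ) (p * s ^ (p - 1)),
        RCLike.real_smul_eq_coe_smul (K := ℂ) ((1 - p) * s ^ p),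
        inner_smul_left, inner_smul_left, hgg]
      simp [ha_def, Complex.ofReal_mul]
    have h3 : 0 ≤ (⟪B g, g⟫_ℂ).re - (⟪(CFC.rpow T p) g, g⟫_ℂ).re := by
      have : (B - CFC.rpow T p) g = B g - (CFC.rpow T p) g := rfl
      simpa [ContinuousLinearMap.reApplyInnerSelf, this, inner_sub_left] using (RCLike.nonneg_iff.mp h2).1
    linarith [hBg ▸ h3]
  rcases eq_or_lt_of_le ha0 with hA | hA
  · -- a = 0 : take s → 0⁺
    rw [← hA, Real.zero_rpow hp0.ne']
    have htend : Filter.Tendsto (fun s : ℝ => (1 - p) * s ^ p) (nhdsWithin 0 (Set.Ioi 0))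
        (nhds 0) := by
      have hc : Filter.Tendsto (fun s : ℝ => s ^ p) (nhds 0) (nhds ((0:ℝ) ^ p)) :=
        (Real.continuousAt_rpow_const 0 p (Or.inr hp0.le)).tendsto
      rw [Real.zero_rpow hp0.ne'] at hc
      have := (hc.const_mul (1 - p)).mono_left
        (nhdsWithin_le_nhds (s := Set.Ioi (0:ℝ)))
      simpa using this
    refine ge_of_tendsto htend ?_
    filter_upwards [self_mem_nhdsWithin] with s hs
    have := key s hs
    rw [← hA] at this
    simpa using this
  · -- a > 0 : take s = a
    have := key a hA
    have e : p * a ^ (p - 1) * a + (1 - p) * a ^ p = a ^ p := by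
      have : a ^ (p - 1) * a = a ^ p := by
        nth_rewrite 2 [← Real.rpow_one a]
        rw [← Real.rpow_add hA]; ring_nf
      nlinarith [this]
    linarith [e ▸ this]
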